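/- (Inverse of a Vandermonde matrix via elementary symmetric polynomials.) Let x₁, …, x_N be pairwise distinct elements of a field, and let V be the N × N matrix with entries V_{p,k} = x_k^{p−1} (rows p = 1,…,N, columns k = 1,…,N). Then V is invertible and its inverse has entries (V^{−1})_{k,p} = (−1)^{N−p} · e_{N−p}({x_j : j ≠ k}) / ∏_{j≠k} (x_k − x_j). -/

import Mathlib

open Finset Matrix Polynomial

theorem inverse_vandermonde_esymm
    {F : Type*} [Field F] (N : ℕ) (hN : 1 ≤ N) (x : Fin N → F)
    (hx : Function.Injective x)
    (V : Matrix (Fin N) (Fin N) F) (hV : ∀ p k, V p k = x k ^ (p : ℕ)) :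
    IsUnit V.det ∧
    ∀ k p : Fin N, V⁻¹ k p =
      (-1 : F) ^ (N - ((p : ℕ) + 1)) *
        (((Finset.univ.erase k).val.map x).esymm (N - ((p : ℕ) + 1))) /
        ∏ j ∈ Finset.univ.erase k, (x k - x j) := by
  classical
  set W : Matrix (Fin N) (Fin N) F := fun k p =>
    (-1 : F) ^ (N - ((p : ℕ) + 1)) *
        (((Finset.univ.erase k).val.map x).esymm (N - ((p : ℕ) + 1))) /
        ∏ j ∈ Finset.univ.erase k, (x k - x j) with hW
  have hD : ∀ k : Fin N, (∏ j ∈ Finset.univ.erase k, (x k - x j)) ≠ 0 := by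
    intro k
    refine Finset.prod_ne_zero_iff.2 fun j hj => sub_ne_zero.2 ?_
    exact fun h => (Finset.mem_erase.1 hj).1 (hx h.symm)
  have key : ∀ k y : F, ∀ kk : Fin N,
      ∑ p : Fin N, ((-1 : F) ^ (N - ((p : ℕ) + 1)) *
        (((Finset.univ.erase kk).val.map x).esymm (N - ((p : ℕ) + 1)))) * y ^ (p : ℕ)
      = ∏ j ∈ Finset.univ.erase kk, (y - x j) := by
    intro k y kk
    set s : Multiset F := (Finset.univ.erase kk).val.map x with hs
    have hcard : Multiset.card s = N - 1 := by
      simp [hs, Finset.card_erase_of_mem]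
    set P : Polynomial F := (s.map fun t => Polynomial.X - Polynomial.C t).prod with hP
    have hdeg : P.natDegree < N := by
      rw [hP, Polynomial.natDegree_multiset_prod_X_sub_C_eq_card, hcard]
      omega
    have heval : P.eval y = ∏ j ∈ Finset.univ.erase kk, (y - x j) := by
      rw [hP, Polynomial.eval_multiset_prod, Multiset.map_map, hs, Multiset.map_map]
      simp [Finset.prod, Function.comp]
    rw [← heval, Polynomial.eval_eq_sum_range' (Nat.lt_of_lt_of_le hdeg le_rfl),
      ← Fin.sum_univ_eq_sum_range]
    refine Finset.sum_congr rfl fun p _ => ?_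
    have hpN : (p : ℕ) < N := p.isLt
    have hple : (p : ℕ) ≤ Multiset.card s := by
      rw [hcard]; omega
    rw [Multiset.prod_X_sub_C_coeff s hple, hcard]
    have hE : N - ((p : ℕ) + 1) = N - 1 - (p : ℕ) := by omega
    rw [hE]
  have hWV : W * V = 1 := by
    ext k k'
    simp only [Matrix.mul_apply, Matrix.one_apply]
    simp only [hW, hV]
    have : ∑ p : Fin N, (-1 : F) ^ (N - ((p : ℕ) + 1)) *
        (((Finset.univ.erase k).val.map x).esymm (N - ((p : ℕ) + 1))) / (∏ j ∈ Finset.univ.erase k, (x k - x j)) * x k' ^ (p : ℕ)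
        = (∑ p : Fin N, ((-1 : F) ^ (N - ((p : ℕ) + 1)) *
        (((Finset.univ.erase k).val.map x).esymm (N - ((p : ℕ) + 1)))) * x k' ^ (p : ℕ)) / (∏ j ∈ Finset.univ.erase k, (x k - x j)) := by
      rw [Finset.sum_div]
      exact Finset.sum_congr rfl fun p _ => by ring
    rw [this, key k (x k') k]
    by_cases h : k = k'
    · subst h
      simp [div_self (hD k)]
    · have hk' : k' ∈ Finset.univ.erase k := Finset.mem_erase.2 ⟨fun h' => h h'.symm, Finset.mem_univ _⟩
      rw [Finset.prod_eq_zero hk' (by ring), if_neg h, zero_div]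
  have hdet : IsUnit V.det := Matrix.isUnit_det_of_left_inverse hWV
  refine ⟨hdet, fun k p => ?_⟩
  rw [Matrix.inv_eq_left_inv hWV]
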